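/- Let Λ ⊂ ℝ^n be a lattice of rank r and Λ* its dual lattice inside span_ℝ(Λ). Then for each 1 ≤ k ≤ r, the successive minima satisfy 1 ≤ s_k(Λ)·s_{r−k+1}(Λ*). -/

import Mathlib

open scoped BigOperators RealInnerProductSpace

/-- The `k`-th successive minimum of a set `Λ ⊂ ℝ^n`. -/
noncomputable def succMin {n : ℕ} (Λ : Set (EuclideanSpace ℝ (Fin n))) (k : ℕ) : ℝ :=
  sInf {σ : ℝ | 0 < σ ∧ ∃ v : Fin k → EuclideanSpace ℝ (Fin n),
    (∀ i, v i ∈ Λ) ∧ LinearIndependent ℝ v ∧ ∀ i, ‖v i‖ ≤ σ}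

lemma aux_pair {n r k m : ℕ} {B : Fin r → EuclideanSpace ℝ (Fin n)}
    (hB : LinearIndependent ℝ B) (hkm : r < k + m)
    (v : Fin k → EuclideanSpace ℝ (Fin n)) (hv : ∀ i, v i ∈ Submodule.span ℝ (Set.range B))
    (hvli : LinearIndependent ℝ v)
    (w : Fin m → EuclideanSpace ℝ (Fin n)) (hw : ∀ j, w j ∈ Submodule.span ℝ (Set.range B))
    (hwli : LinearIndependent ℝ w) :
    ∃ i j, (⟪w j, v i⟫ : ℝ) ≠ 0 := by
  by_contra h
  push_neg at h
  have hdisj : Disjoint (Submodule.span ℝ (Set.range w)) (Submodule.span ℝ (Set.range v)) := by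
    rw [Submodule.disjoint_def]
    intro x hxw hxv
    obtain ⟨b, hb⟩ := (Submodule.mem_span_range_iff_exists_fun ℝ).1 hxw
    obtain ⟨a, ha⟩ := (Submodule.mem_span_range_iff_exists_fun ℝ).1 hxv
    have hxx : (⟪(∑ j, b j • w j), (∑ i, a i • v i)⟫ : ℝ) = 0 := by
      rw [sum_inner]
      refine Finset.sum_eq_zero fun j _ => ?_
      rw [real_inner_smul_left, inner_sum]
      rw [Finset.sum_eq_zero fun i _ => by rw [real_inner_smul_right, h i j, mul_zero]]
      ring
    rw [hb, ha] at hxx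
    exact inner_self_eq_zero.1 hxx
  have hli := hwli.sum_type hvli hdisj
  have hcard := finrank_span_eq_card hli
  have hle : Submodule.span ℝ (Set.range (Sum.elim w v)) ≤ Submodule.span ℝ (Set.range B) := by
    rw [Submodule.span_le, Set.Sum.elim_range]
    rintro x (⟨j, rfl⟩ | ⟨i, rfl⟩)
    exacts [hw j, hv i]
  have : FiniteDimensional ℝ (Submodule.span ℝ (Set.range B)) :=
    FiniteDimensional.span_of_finite ℝ (Set.finite_range B)
  have := Submodule.finrank_mono hle
  rw [hcard, finrank_span_eq_card hB] at this
  simp [Fintype.card_sum] at this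
  omega

lemma dual_basis_exists {n r : ℕ} {B : Fin r → EuclideanSpace ℝ (Fin n)}
    (hB : LinearIndependent ℝ B) :
    ∃ w : Fin r → EuclideanSpace ℝ (Fin n),
      (∀ i, w i ∈ Submodule.span ℝ (Set.range B)) ∧
      (∀ i j, (⟪w i, B j⟫ : ℝ) = if i = j then 1 else 0) := by
  set V := Submodule.span ℝ (Set.range B) with hV
  have : FiniteDimensional ℝ V := FiniteDimensional.span_of_finite ℝ (Set.finite_range B)
  let b : Module.Basis (Fin r) ℝ V := Module.Basis.span hB
  let w' : Fin r → V := fun i =>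
    (InnerProductSpace.toDual ℝ V).symm (LinearMap.toContinuousLinearMap (b.coord i))
  refine ⟨fun i => (w' i : EuclideanSpace ℝ (Fin n)), fun i => (w' i).2, fun i j => ?_⟩
  have hbj : (b j : EuclideanSpace ℝ (Fin n)) = B j := congrArg Subtype.val (Module.Basis.span_apply hB j)
  have h1 : (⟪(w' i : EuclideanSpace ℝ (Fin n)), B j⟫ : ℝ) = ⟪w' i, b j⟫ := by
    rw [← hbj]; rfl
  rw [h1, InnerProductSpace.toDual_symm_apply]
  simp [b.coord_apply, Finsupp.single_apply, eq_comm]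

/-- A family with a "biorthogonal partner" family is linearly independent. -/
lemma li_of_biorthogonal {n m : ℕ} {w u : Fin m → EuclideanSpace ℝ (Fin n)}
    (h : ∀ i j, (⟪w i, u j⟫ : ℝ) = if i = j then 1 else 0) :
    LinearIndependent ℝ w := by
  rw [Fintype.linearIndependent_iff]
  intro c hc j
  have := congrArg (fun x => (⟪x, u j⟫ : ℝ)) hc
  simp only [inner_zero_left] at this
  rw [sum_inner] at this
  simp only [real_inner_smul_left, h] at this
  simpa using this

theorem stmt1 (n r : ℕ) (B : Fin r → EuclideanSpace ℝ (Fin n))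
    (hB : LinearIndependent ℝ B)
    (Λ : Set (EuclideanSpace ℝ (Fin n)))
    (hΛ : Λ = ((Submodule.span ℤ (Set.range B) : Submodule ℤ
      (EuclideanSpace ℝ (Fin n))) : Set (EuclideanSpace ℝ (Fin n))))
    (Λdual : Set (EuclideanSpace ℝ (Fin n)))
    (hdual : Λdual = {x : EuclideanSpace ℝ (Fin n) |
      x ∈ Submodule.span ℝ (Set.range B) ∧ ∀ y ∈ Λ, ∃ m : ℤ, (⟪x, y⟫ : ℝ) = m})
    (k : ℕ) (hk1 : 1 ≤ k) (hkr : k ≤ r) :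
    1 ≤ succMin Λ k * succMin Λdual (r - k + 1) := by
  set m := r - k + 1 with hm
  have hkm : r < k + m := by omega
  set S := {σ : ℝ | 0 < σ ∧ ∃ v : Fin k → EuclideanSpace ℝ (Fin n),
    (∀ i, v i ∈ Λ) ∧ LinearIndependent ℝ v ∧ ∀ i, ‖v i‖ ≤ σ} with hS
  set T := {σ : ℝ | 0 < σ ∧ ∃ v : Fin m → EuclideanSpace ℝ (Fin n),
    (∀ i, v i ∈ Λdual) ∧ LinearIndependent ℝ v ∧ ∀ i, ‖v i‖ ≤ σ} with hT
  -- the key pairwise estimate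
  have key : ∀ σ ∈ S, ∀ τ ∈ T, 1 ≤ σ * τ := by
    rintro σ ⟨hσ, v, hvΛ, hvli, hvnorm⟩ τ ⟨hτ, w, hwΛ, hwli, hwnorm⟩
    have hvspan : ∀ i, v i ∈ Submodule.span ℝ (Set.range B) := by
      intro i
      have := hvΛ i
      rw [hΛ] at this
      exact Submodule.span_subset_span ℤ ℝ _ this
    have hwspan : ∀ j, w j ∈ Submodule.span ℝ (Set.range B) := fun j => ((hdual ▸ hwΛ j)).1
    obtain ⟨i, j, hij⟩ := aux_pair hB hkm v hvspan hvli w hwspan hwli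
    obtain ⟨z, hz⟩ := ((hdual ▸ hwΛ j)).2 (v i) (hvΛ i)
    have hz0 : z ≠ 0 := by rintro rfl; simp [hz] at hij
    have h1 : (1 : ℝ) ≤ |(z : ℝ)| := by
      rw [← Int.cast_abs]
      exact_mod_cast Int.one_le_abs hz0
    have h2 : |(⟪w j, v i⟫ : ℝ)| ≤ ‖w j‖ * ‖v i‖ := abs_real_inner_le_norm _ _
    calc (1:ℝ) ≤ |(z:ℝ)| := h1
      _ = |(⟪w j, v i⟫ : ℝ)| := by rw [hz]
      _ ≤ ‖w j‖ * ‖v i‖ := h2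
      _ ≤ τ * σ := mul_le_mul (hwnorm j) (hvnorm i) (norm_nonneg _) hτ.le
      _ = σ * τ := mul_comm _ _
  -- nonemptiness of S
  have hSne : S.Nonempty := by
    set σ0 : ℝ := 1 + ∑ i : Fin k, ‖B (Fin.castLE hkr i)‖ with hσ0
    have hpos : 0 < σ0 := by
      have : (0:ℝ) ≤ ∑ i : Fin k, ‖B (Fin.castLE hkr i)‖ :=
        Finset.sum_nonneg fun i _ => norm_nonneg _
      linarith
    refine ⟨σ0, hpos, fun i => B (Fin.castLE hkr i), ?_, ?_, ?_⟩
    · intro i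
      rw [hΛ]
      exact Submodule.subset_span (Set.mem_range_self _)
    · exact hB.comp _ (Fin.castLE_injective hkr)
    · intro i
      have h1 : ‖B (Fin.castLE hkr i)‖ ≤ ∑ j : Fin k, ‖B (Fin.castLE hkr j)‖ :=
        Finset.single_le_sum (f := fun j => ‖B (Fin.castLE hkr j)‖)
          (fun j _ => norm_nonneg _) (Finset.mem_univ i)
      linarith
  -- nonemptiness of T
  have hTne : T.Nonempty := by
    obtain ⟨w, hwspan, hwbi⟩ := dual_basis_exists hB
    have hmr : m ≤ r := by omega
    set w' : Fin m → EuclideanSpace ℝ (Fin n) := fun j => w (Fin.castLE hmr j) with hw'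
    set σ0 : ℝ := 1 + ∑ i : Fin m, ‖w' i‖ with hσ0
    have hpos : 0 < σ0 := by
      have : (0:ℝ) ≤ ∑ i : Fin m, ‖w' i‖ := Finset.sum_nonneg fun i _ => norm_nonneg _
      linarith
    refine ⟨σ0, hpos, w', ?_, ?_, ?_⟩
    · intro j
      rw [hdual]
      refine ⟨hwspan _, fun y hy => ?_⟩
      rw [hΛ] at hy
      induction hy using Submodule.span_induction with
      | mem y hy =>
        obtain ⟨i, rfl⟩ := hy
        exact ⟨if Fin.castLE hmr j = i then 1 else 0, by rw [hwbi]; split <;> simp⟩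
      | zero => exact ⟨0, by simp⟩
      | add y z _ _ hy hz =>
        obtain ⟨a, ha⟩ := hy; obtain ⟨b, hb⟩ := hz
        exact ⟨a + b, by rw [inner_add_right, ha, hb]; push_cast; ring⟩
      | smul c y _ hy =>
        obtain ⟨a, ha⟩ := hy
        exact ⟨c * a, by rw [← Int.cast_smul_eq_zsmul ℝ, real_inner_smul_right, ha]; push_cast; ring⟩
    · refine li_of_biorthogonal (u := fun j => B (Fin.castLE hmr j)) ?_
      intro i j
      rw [hw']
      simp only []
      rw [hwbi]
      simp [Fin.castLE_injective hmr |>.eq_iff]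
    · intro i
      have h1 : ‖w' i‖ ≤ ∑ j : Fin m, ‖w' j‖ :=
        Finset.single_le_sum (f := fun j => ‖w' j‖)
          (fun j _ => norm_nonneg _) (Finset.mem_univ i)
      linarith
  -- conclude via infima
  have hSbdd : BddBelow S := ⟨0, fun σ hσ => hσ.1.le⟩
  obtain ⟨τ0, hτ0⟩ := id hTne
  have hSpos : 0 < sInf S := by
    have hle : 1 / τ0 ≤ sInf S :=
      le_csInf hSne fun σ hσ => by
        rw [div_le_iff₀ hτ0.1]
        exact key σ hσ τ0 hτ0
    have h0 : (0:ℝ) < 1 / τ0 := div_pos one_pos hτ0.1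
    linarith
  have hTlb : 1 / sInf S ≤ sInf T := by
    refine le_csInf hTne fun τ hτ => ?_
    have h1 : 1 / τ ≤ sInf S :=
      le_csInf hSne fun σ hσ => by
        rw [div_le_iff₀ hτ.1]
        exact key σ hσ τ hτ
    rw [div_le_iff₀ hτ.1] at h1
    rw [div_le_iff₀ hSpos, mul_comm]
    exact h1
  have hfin : (1:ℝ) ≤ sInf S * sInf T := by
    calc (1:ℝ) = sInf S * (1 / sInf S) := by field_simp
      _ ≤ sInf S * sInf T := mul_le_mul_of_nonneg_left hTlb hSpos.le
  exact hfin
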